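/- Let f : ℝⁿ × ℝ → ℝⁿ be continuously differentiable in its first (state) variable and continuous in its second (time) variable, let δ : ℝ → ℝⁿ be continuous, and let α : [t₀,∞) → ℝ be continuous with ∫_{t₀}^{∞} α(τ) dτ = ∞. Assume that for all x ∈ ℝⁿ, all t ≥ t₀, and all v ∈ ℝⁿ, ⟪Dₓf(x,t) v, v⟫ ≤ −α(t) ‖v‖². If x, x* : [t₀,∞) → ℝⁿ are two differentiable functions satisfying x'(t) = f(x(t), t) + δ(t) and x*'(t) = f(x*(t), t) + δ(t) for all t ≥ t₀, then ‖x(t) − x*(t)‖ → 0 as t → ∞ (all solutions converge to one another asymptotically, though not necessarily uniformly or exponentially). -/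

import Mathlib

open Filter Topology
open scoped RealInnerProductSpace

/-- Remark 2. If `⟪Dₓf(x,t)v, v⟫ ≤ -α(t)‖v‖²` with
`∫_{t₀}^∞ α = ∞`, then any two solutions of `ẋ = f(x,t) + δ(t)` converge to
one another: `‖x(t) - x*(t)‖ → 0` as `t → ∞`. -/
theorem solutions_converge_to_each_other {n : ℕ} (hn : 1 ≤ n) (t₀ : ℝ)
    (f : EuclideanSpace ℝ (Fin n) → ℝ → EuclideanSpace ℝ (Fin n))
    (δ : ℝ → EuclideanSpace ℝ (Fin n))
    (hf : ∀ t, t₀ ≤ t → ContDiff ℝ 1 (fun y => f y t))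
    (hft : ∀ y, ContinuousOn (fun t => f y t) (Set.Ici t₀))
    (hδ : Continuous δ)
    (α : ℝ → ℝ) (hα : ContinuousOn α (Set.Ici t₀))
    (hαdiv : Tendsto (fun T => ∫ τ in t₀..T, α τ) atTop atTop)
    (hμ : ∀ (x : EuclideanSpace ℝ (Fin n)) (t : ℝ), t₀ ≤ t →
      ∀ v : EuclideanSpace ℝ (Fin n),
        ⟪fderiv ℝ (fun y => f y t) x v, v⟫ ≤ -α t * ‖v‖ ^ 2)
    (x xs : ℝ → EuclideanSpace ℝ (Fin n))
    (hx : ∀ t, t₀ ≤ t → HasDerivAt x (f (x t) t + δ t) t)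
    (hxs : ∀ t, t₀ ≤ t → HasDerivAt xs (f (xs t) t + δ t) t) :
    Tendsto (fun t => ‖x t - xs t‖) atTop (𝓝 0) := by
  set e : ℝ → EuclideanSpace ℝ (Fin n) := fun t => x t - xs t with he
  have he' : ∀ t, t₀ ≤ t → HasDerivAt e (f (x t) t - f (xs t) t) t := by
    intro t ht
    have := (hx t ht).sub (hxs t ht)
    exact this.congr_deriv (by abel)
  -- key inequality via mean value along the segment
  have key : ∀ t, t₀ ≤ t → ⟪f (x t) t - f (xs t) t, e t⟫ ≤ -α t * ‖e t‖ ^ 2 := by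
    intro t ht
    set v := e t with hv
    set φ : ℝ → ℝ := fun s => ⟪f (xs t + s • v) t, v⟫ + α t * ‖v‖ ^ 2 * s with hφ
    have hder : ∀ s : ℝ, HasDerivAt φ
        (⟪fderiv ℝ (fun y => f y t) (xs t + s • v) v, v⟫ + α t * ‖v‖ ^ 2) s := by
      intro s
      have h1 : HasDerivAt (fun s : ℝ => xs t + s • v) v s := by
        simpa using ((hasDerivAt_id s).smul_const v).const_add (xs t)
      have h2 : HasFDerivAt (fun y => f y t)
          (fderiv ℝ (fun y => f y t) (xs t + s • v)) (xs t + s • v) :=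
        (((hf t ht).differentiable one_ne_zero) _).hasFDerivAt
      have h3 : HasDerivAt (fun s : ℝ => f (xs t + s • v) t)
          (fderiv ℝ (fun y => f y t) (xs t + s • v) v) s :=
        by have := h2.comp_hasDerivAt s h1; exact this
      have h4 := HasDerivAt.inner ℝ h3 (hasDerivAt_const s v)
      have h5 : HasDerivAt (fun s : ℝ => α t * ‖v‖ ^ 2 * s) (α t * ‖v‖ ^ 2) s := by
        simpa using (hasDerivAt_id s).const_mul (α t * ‖v‖ ^ 2)
      have := h4.add h5
      exact this.congr_deriv (by simp)
    have hmono : Antitone φ := by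
      refine antitone_of_deriv_nonpos (fun s => (hder s).differentiableAt) (fun s => ?_)
      rw [(hder s).deriv]
      have := hμ (xs t + s • v) t ht v
      linarith
    have h01 := hmono (by norm_num : (0:ℝ) ≤ 1)
    have e0 : xs t + (0:ℝ) • v = xs t := by simp
    have e1 : xs t + (1:ℝ) • v = x t := by simp [hv, he]
    rw [hφ] at h01
    simp only [e0, e1, mul_one, mul_zero, add_zero] at h01
    have hsub : ⟪f (x t) t - f (xs t) t, v⟫ = ⟪f (x t) t, v⟫ - ⟪f (xs t) t, v⟫ :=
      inner_sub_left _ _ _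
    rw [← hv] at *
    linarith [h01, hsub]
  -- the primitive of α
  set A : ℝ → ℝ := fun u => ∫ τ in t₀..u, α τ with hA
  have hint : ∀ b, t₀ ≤ b → IntervalIntegrable α MeasureTheory.volume t₀ b := by
    intro b hb
    exact (hα.mono (by rw [Set.uIcc_of_le hb]; exact Set.Icc_subset_Ici_self :
      Set.uIcc t₀ b ⊆ Set.Ici t₀)).intervalIntegrable
  have hAderiv : ∀ t, t₀ < t → HasDerivAt A (α t) t := by
    intro t ht
    refine intervalIntegral.integral_hasDerivAt_right (hint t ht.le) ?_ ?_
    · exact ContinuousAt.stronglyMeasurableAtFilter isOpen_Ioi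
        (fun u hu => hα.continuousAt (Ici_mem_nhds hu)) t ht
    · exact hα.continuousAt (Ici_mem_nhds ht)
  have hAcont : ∀ b, t₀ ≤ b → ContinuousOn A (Set.Icc t₀ b) := by
    intro b hb
    have huIcc : Set.uIcc t₀ b = Set.Icc t₀ b := Set.uIcc_of_le hb
    have h2 := intervalIntegral.continuousOn_primitive_interval
      (f := α) (μ := MeasureTheory.volume) (a := t₀) (b := b) ?_
    · rwa [huIcc] at h2
    · rw [huIcc]
      exact (hα.mono Set.Icc_subset_Ici_self).integrableOn_compact isCompact_Icc
  -- the Lyapunov-like function g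
  set g : ℝ → ℝ := fun u => ‖e u‖ ^ 2 * Real.exp (2 * A u) with hg
  have hgderiv : ∀ t, t₀ < t → HasDerivAt g
      ((2 * ⟪f (x t) t - f (xs t) t, e t⟫) * Real.exp (2 * A t)
        + ‖e t‖ ^ 2 * (2 * α t * Real.exp (2 * A t))) t := by
    intro t ht
    have hN : HasDerivAt (fun u => (‖e u‖:ℝ) ^ 2)
        (2 * ⟪f (x t) t - f (xs t) t, e t⟫) t := by
      have := HasDerivAt.inner ℝ (he' t ht.le) (he' t ht.le)
      have heq : (fun u => (‖e u‖:ℝ) ^ 2) = fun u => ⟪e u, e u⟫ := by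
        funext u; rw [real_inner_self_eq_norm_sq]
      rw [heq]
      refine this.congr_deriv ?_
      rw [real_inner_comm]
      ring
    have hE : HasDerivAt (fun u => Real.exp (2 * A u)) (2 * α t * Real.exp (2 * A t)) t := by
      have := (((hAderiv t ht).const_mul 2)).exp
      simpa [mul_comm] using this
    exact hN.mul hE
  have hganti : ∀ t, t₀ ≤ t → g t ≤ g t₀ := by
    intro b hb
    have hD : Convex ℝ (Set.Icc t₀ b) := convex_Icc _ _
    have hcont : ContinuousOn g (Set.Icc t₀ b) := by
      apply ContinuousOn.mul
      · intro u hu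
        exact (((he' u hu.1).continuousAt).norm.pow 2).continuousWithinAt
      · exact (Real.continuous_exp.comp_continuousOn
          ((continuousOn_const.mul (hAcont b hb)))).congr (fun u _ => rfl)
    have hIoo : interior (Set.Icc t₀ b) ⊆ Set.Ioi t₀ := by
      rcases le_or_gt b t₀ with h | h
      · intro u hu
        rw [interior_Icc] at hu
        exact absurd (hu.1.trans hu.2) (by simp [h.trans hb] at *; linarith [hu.1, hu.2])
      · rw [interior_Icc]; exact fun u hu => hu.1
    have hdiff : DifferentiableOn ℝ g (interior (Set.Icc t₀ b)) := fun u hu =>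
      ((hgderiv u (hIoo hu)).differentiableAt).differentiableWithinAt
    have hnonpos : ∀ u ∈ interior (Set.Icc t₀ b), deriv g u ≤ 0 := by
      intro u hu
      have hu' : t₀ < u := hIoo hu
      rw [(hgderiv u hu').deriv]
      have hk := key u hu'.le
      have hex : (0:ℝ) < Real.exp (2 * A u) := Real.exp_pos _
      nlinarith [hk, hex, sq_nonneg (‖e u‖)]
    have := antitoneOn_of_deriv_nonpos hD hcont hdiff hnonpos
      (Set.left_mem_Icc.2 hb) (Set.right_mem_Icc.2 hb) hb
    exact this
  -- conclude
  have hA0 : A t₀ = 0 := by simp [hA]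
  set C : ℝ := ‖e t₀‖ ^ 2 with hC
  have hbound : ∀ t, t₀ ≤ t → ‖e t‖ ^ 2 ≤ C * Real.exp (-(2 * A t)) := by
    intro t ht
    have h1 := hganti t ht
    rw [hg] at h1
    simp only [hA0, mul_zero, Real.exp_zero, mul_one] at h1
    have hex : (0:ℝ) < Real.exp (2 * A t) := Real.exp_pos _
    rw [Real.exp_neg, ← div_eq_mul_inv, le_div_iff₀ hex]
    exact h1
  have hlim : Tendsto (fun t => C * Real.exp (-(2 * A t))) atTop (𝓝 0) := by
    have h2A : Tendsto (fun t => 2 * A t) atTop atTop :=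
      (tendsto_const_mul_atTop_of_pos (by norm_num : (0:ℝ) < 2)).2 hαdiv
    have : Tendsto (fun t => Real.exp (-(2 * A t))) atTop (𝓝 0) := by
      exact Real.tendsto_exp_atBot.comp (tendsto_neg_atTop_atBot.comp h2A)
    simpa using this.const_mul C
  have hsq : Tendsto (fun t => (‖e t‖:ℝ) ^ 2) atTop (𝓝 0) := by
    refine squeeze_zero' ?_ ?_ hlim
    · exact Eventually.of_forall (fun t => sq_nonneg _)
    · filter_upwards [eventually_ge_atTop t₀] with t ht
      exact hbound t ht
  have : Tendsto (fun t => Real.sqrt ((‖e t‖:ℝ) ^ 2)) atTop (𝓝 0) := by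
    have := (Real.continuous_sqrt.tendsto' 0 0 (by simp)).comp hsq
    exact this
  refine this.congr (fun t => ?_)
  exact Real.sqrt_sq (norm_nonneg _)
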